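/- Let 𝔽 be a field of characteristic zero, f ∈ 𝔽[x_1,…,x_n], a, b ∈ 𝔽^n, α ∈ ℕ^n and k ∈ ℕ^+. If D^1_{a,β}(f) = D^1_{b,β}(f) for all β ∈ ℕ^n with β ≥ α and |β| = |α| + k − 1, then D^k_{a,α}(f) = D^k_{b,α}(f). -/

import Mathlib

open MvPolynomial

noncomputable section

variable {F : Type*} [Field F] [CharZero F] {n : ℕ}

/-- `∂^β = ∂_{x_1}^{β_1} ⋯ ∂_{x_n}^{β_n}` as an `F`-linear endomorphism of `F[x]`. -/
def pdPow (β : Fin n →₀ ℕ) : Module.End F (MvPolynomial (Fin n) F) :=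
  (((List.finRange n).map fun i =>
    (((pderiv i).toLinearMap : Module.End F (MvPolynomial (Fin n) F)) ^ (β i)))).prod

/-- `D_{a,α}^k(f) = ∑_{|β|=k} (k choose β) a^β ∂^β ([x^{α+β}](f) · x^{α+β})`. -/
def Dk (a : Fin n → F) (α : Fin n →₀ ℕ) (k : ℕ) (f : MvPolynomial (Fin n) F) :
    MvPolynomial (Fin n) F :=
  ∑ β ∈ Finset.Nat.antidiagonalTuple n k,
    ((Nat.multinomial Finset.univ β : F) * ∏ i, a i ^ β i) •
      pdPow (Finsupp.equivFunOnFinite.symm β)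
        (monomial (α + Finsupp.equivFunOnFinite.symm β)
          (coeff (α + Finsupp.equivFunOnFinite.symm β) f))

set_option linter.unusedSectionVars false

namespace DkAux

/-- `∂_i` as an `F`-linear endomorphism. -/
abbrev D (F : Type*) [Field F] (n : ℕ) (i : Fin n) : Module.End F (MvPolynomial (Fin n) F) :=
  (pderiv i).toLinearMap

/-- The directional derivative operator `L a = ∑ i, a i • ∂_i`. -/
def L (a : Fin n → F) : Module.End F (MvPolynomial (Fin n) F) := ∑ i, a i • D F n i

lemma pderiv_pderiv_comm (i j : Fin n) (p : MvPolynomial (Fin n) F) :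
    pderiv i (pderiv j p) = pderiv j (pderiv i p) := by
  rcases eq_or_ne i j with rfl | hij
  · rfl
  induction p using MvPolynomial.induction_on' with
  | add p q hp hq => simp [hp, hq]
  | monomial γ c =>
    rw [pderiv_monomial, pderiv_monomial, pderiv_monomial, pderiv_monomial]
    rw [Finsupp.tsub_apply, Finsupp.tsub_apply,
      Finsupp.single_apply, Finsupp.single_apply,
      if_neg hij, if_neg (Ne.symm hij), Nat.sub_zero, Nat.sub_zero]
    rw [tsub_tsub, tsub_tsub, add_comm ((Finsupp.single j 1)) ((Finsupp.single i 1))]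
    ring_nf

lemma commute_D (i j : Fin n) : Commute (D F n i) (D F n j) := by
  apply LinearMap.ext; intro p
  exact pderiv_pderiv_comm i j p

lemma commute_L (a b : Fin n → F) : Commute (L a) (L b) := by
  refine Commute.sum_left _ _ _ (fun i _ => Commute.sum_right _ _ _ (fun j _ => ?_))
  exact ((commute_D i j).smul_left (a i)).smul_right (b j)

lemma D_pow_monomial (i : Fin n) (m : ℕ) (γ : Fin n →₀ ℕ) (c : F) :
    (D F n i ^ m) (monomial γ c) =
      monomial (γ - Finsupp.single i m) (((γ i).descFactorial m : ℕ) * c) := by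
  induction m generalizing γ c with
  | zero => simp
  | succ m ih =>
    rw [pow_succ, Module.End.mul_apply]
    show (D F n i ^ m) (pderiv i (monomial γ c)) = _
    rw [pderiv_monomial, ih]
    rw [Finsupp.tsub_apply, Finsupp.single_apply, if_pos rfl, tsub_tsub, ← Finsupp.single_add]
    have h1 : (1 : ℕ) + m = m + 1 := by omega
    rw [h1]
    congr 1
    cases hγ : γ i with
    | zero => simp
    | succ t =>
      rw [Nat.succ_descFactorial_succ, Nat.succ_sub_one]
      push_cast
      ring

lemma listD_monomial (β : Fin n →₀ ℕ) (l : List (Fin n)) (hl : l.Nodup)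
    (γ : Fin n →₀ ℕ) (c : F) :
    ((l.map fun i => D F n i ^ β i).prod) (monomial γ c) =
      monomial (γ - (l.map fun i => Finsupp.single i (β i)).sum)
        (((l.map fun i => (γ i).descFactorial (β i)).prod : ℕ) * c) := by
  induction l generalizing γ c with
  | nil => simp
  | cons i l ih =>
    have hi : i ∉ l := (List.nodup_cons.mp hl).1
    have hln : l.Nodup := (List.nodup_cons.mp hl).2
    rw [List.map_cons, List.prod_cons, Module.End.mul_apply, ih hln, D_pow_monomial]
    have hS : ∀ l' : List (Fin n), i ∉ l' →
        ((l'.map fun j => Finsupp.single j (β j)).sum) i = 0 := by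
      intro l' hi'
      induction l' with
      | nil => simp
      | cons j t iht =>
        rw [List.map_cons, List.sum_cons, Finsupp.add_apply]
        rw [iht (fun h => hi' (List.mem_cons_of_mem _ h))]
        have : j ≠ i := fun h => hi' (h ▸ List.mem_cons_self)
        simp [Finsupp.single_apply, this]
    have hS := hS l hi
    rw [Finsupp.tsub_apply, hS, Nat.sub_zero, tsub_tsub]
    rw [List.map_cons, List.sum_cons, add_comm (Finsupp.single i (β i))]
    rw [List.map_cons, List.prod_cons]
    push_cast
    ring_nf

lemma list_prod_univ {M : Type*} [CommMonoid M] (g : Fin n → M) :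
    ((List.finRange n).map g).prod = ∏ i, g i := by
  rw [show (∏ i, g i) = _ from Finset.prod_eq_multiset_prod _ _, Fin.univ_def]
  simp [Multiset.map_coe]

lemma list_sum_univ {M : Type*} [AddCommMonoid M] (g : Fin n → M) :
    ((List.finRange n).map g).sum = ∑ i, g i := by
  rw [show (∑ i, g i) = _ from Finset.sum_eq_multiset_sum _ _, Fin.univ_def]
  simp [Multiset.map_coe]

lemma sum_single_eq (β : Fin n →₀ ℕ) :
    ((List.finRange n).map fun i => Finsupp.single i (β i)).sum = β := by
  rw [list_sum_univ]
  ext j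
  rw [Finsupp.finset_sum_apply]
  simp [Finsupp.single_apply]

lemma pdPow_monomial (β γ : Fin n →₀ ℕ) (c : F) :
    pdPow β (monomial γ c) =
      monomial (γ - β) ((∏ i, (γ i).descFactorial (β i) : ℕ) * c) := by
  rw [pdPow, listD_monomial β _ (List.nodup_finRange n), sum_single_eq,
    list_prod_univ]

lemma coeff_pdPow (β α : Fin n →₀ ℕ) (f : MvPolynomial (Fin n) F) :
    coeff α (pdPow (F := F) β f)
      = ((∏ i, ((α + β) i).descFactorial (β i) : ℕ) : F) * coeff (α + β) f := by
  conv_lhs => rw [f.as_sum, map_sum]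
  rw [coeff_sum]
  rw [Finset.sum_eq_single (α + β)]
  · rw [pdPow_monomial, add_tsub_cancel_right, coeff_monomial, if_pos rfl]
  · intro γ hγ hne
    rw [pdPow_monomial, coeff_monomial]
    split_ifs with hc
    · have hβγ : ¬ β ≤ γ := fun hle => hne (by rw [← hc, tsub_add_cancel_of_le hle])
      obtain ⟨i, hi⟩ : ∃ i, γ i < β i := by
        by_contra hcon
        push_neg at hcon
        exact hβγ (Finsupp.le_def.mpr fun i => hcon i)
      have : (∏ i, (γ i).descFactorial (β i)) = 0 :=
        Finset.prod_eq_zero (Finset.mem_univ i)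
          (Nat.descFactorial_eq_zero_iff_lt.mpr hi)
      rw [this]
      simp
    · rfl
  · intro hmem
    rw [notMem_support_iff] at hmem
    rw [pdPow_monomial, hmem, mul_zero, coeff_monomial]
    simp

lemma coeff_pderiv (i : Fin n) (α : Fin n →₀ ℕ) (f : MvPolynomial (Fin n) F) :
    coeff α (pderiv i f) = ((α i + 1 : ℕ) : F) * coeff (α + Finsupp.single i 1) f := by
  conv_lhs => rw [f.as_sum, map_sum, coeff_sum]
  rw [Finset.sum_eq_single (α + Finsupp.single i 1)]
  · rw [pderiv_monomial, add_tsub_cancel_right, coeff_monomial, if_pos rfl]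
    rw [Finsupp.add_apply, Finsupp.single_apply, if_pos rfl]
    ring
  · intro γ hγ hne
    rw [pderiv_monomial, coeff_monomial]
    split_ifs with hc
    · have hγi : γ i = 0 := by
        by_contra hzero
        have h1 : Finsupp.single i 1 ≤ γ := by
          rw [Finsupp.le_def]
          intro j
          rcases eq_or_ne j i with rfl | hj
          · simpa [Finsupp.single_apply] using Nat.one_le_iff_ne_zero.mpr hzero
          · simp [Finsupp.single_apply, Ne.symm hj]
        exact hne (by rw [← hc, tsub_add_cancel_of_le h1])
      simp [hγi]
    · rfl
  · intro hmem
    rw [notMem_support_iff] at hmem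
    rw [hmem]
    simp

lemma coeff_L (a : Fin n → F) (α : Fin n →₀ ℕ) (f : MvPolynomial (Fin n) F) :
    coeff α (L a f) =
      ∑ i, a i * (((α i + 1 : ℕ)) : F) * coeff (α + Finsupp.single i 1) f := by
  rw [L, LinearMap.sum_apply, coeff_sum]
  refine Finset.sum_congr rfl fun i _ => ?_
  rw [LinearMap.smul_apply, coeff_smul, smul_eq_mul]
  show a i * coeff α (pderiv i f) = _
  rw [coeff_pderiv, mul_assoc]

lemma noncommProd_univ_fin (g : Fin n → Module.End F (MvPolynomial (Fin n) F)) (h) :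
    Finset.univ.noncommProd g h = ((List.finRange n).map g).prod := by
  calc Finset.univ.noncommProd g h
      = (List.finRange n).toFinset.noncommProd g _ :=
        Finset.noncommProd_congr (List.toFinset_finRange n).symm (fun _ _ => rfl) h
    _ = ((List.finRange n).map g).prod :=
        Finset.noncommProd_toFinset _ _ _ (List.nodup_finRange n)

lemma smul_pow_list_prod (a : Fin n → F) (β : Fin n → ℕ) (l : List (Fin n)) :
    (l.map fun i => (a i • D F n i) ^ β i).prod =
      (l.map fun i => a i ^ β i).prod • (l.map fun i => D F n i ^ β i).prod := by
  induction l with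
  | nil => simp
  | cons i l ih =>
    rw [List.map_cons, List.prod_cons, ih, smul_pow]
    rw [List.map_cons, List.prod_cons, List.map_cons, List.prod_cons]
    rw [smul_mul_assoc, mul_smul_comm, smul_smul]

lemma L_pow_eq (a : Fin n → F) (k : ℕ) :
    (L a) ^ k = ∑ β ∈ Finset.Nat.antidiagonalTuple n k,
      ((Nat.multinomial Finset.univ β : F) * ∏ i, a i ^ β i) •
        pdPow (Finsupp.equivFunOnFinite.symm β) := by
  have hc : ((Finset.univ : Finset (Fin n)) : Set (Fin n)).Pairwise
      (Function.onFun Commute fun i => a i • D F n i) := by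
    intro i _ j _ _
    exact ((commute_D i j).smul_left (a i)).smul_right (a j)
  rw [L, Finset.sum_pow_eq_sum_piAntidiag_of_commute _ _ hc k,
    Finset.piAntidiag_univ_fin_eq_antidiagonalTuple]
  refine Finset.sum_congr rfl fun β hβ => ?_
  rw [noncommProd_univ_fin, smul_pow_list_prod]
  have hpd : pdPow (F := F) (Finsupp.equivFunOnFinite.symm β)
      = ((List.finRange n).map fun i => D F n i ^ β i).prod := by
    rw [pdPow]
    simp [Finsupp.coe_equivFunOnFinite_symm]
  rw [← hpd, list_prod_univ]
  rw [← nsmul_eq_mul, ← Nat.cast_smul_eq_nsmul F, smul_smul]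

lemma Dk_eq_monomial (a : Fin n → F) (α : Fin n →₀ ℕ) (k : ℕ) (f : MvPolynomial (Fin n) F) :
    Dk a α k f = monomial α (coeff α ((L a ^ k) f)) := by
  rw [Dk, L_pow_eq, LinearMap.sum_apply]
  rw [show coeff α (∑ β ∈ Finset.Nat.antidiagonalTuple n k,
      (((Nat.multinomial Finset.univ β : F) * ∏ i, a i ^ β i) •
        pdPow (Finsupp.equivFunOnFinite.symm β)) f)
    = ∑ β ∈ Finset.Nat.antidiagonalTuple n k,
      ((Nat.multinomial Finset.univ β : F) * ∏ i, a i ^ β i) *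
        coeff α (pdPow (Finsupp.equivFunOnFinite.symm β) f) by
    rw [coeff_sum]
    exact Finset.sum_congr rfl fun β _ => by
      rw [LinearMap.smul_apply, coeff_smul, smul_eq_mul]]
  rw [map_sum]
  refine Finset.sum_congr rfl fun β _ => ?_
  set β' := Finsupp.equivFunOnFinite.symm β with hβ'
  rw [coeff_pdPow, pdPow_monomial, add_tsub_cancel_right]
  rw [smul_monomial, smul_eq_mul, mul_assoc]

/-- The key vanishing lemma. -/
lemma vanish (l : List (Fin n → F)) :
    ∀ (α : Fin n →₀ ℕ) (g : MvPolynomial (Fin n) F),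
    (∀ γ : Fin n →₀ ℕ, α ≤ γ →
        (γ.sum fun _ e => e) = (α.sum fun _ e => e) + l.length →
        coeff γ g = 0) →
    coeff α (((l.map L).prod) g) = 0 := by
  induction l with
  | nil =>
    intro α g hg
    simpa using hg α le_rfl (by simp)
  | cons v l ih =>
    intro α g hg
    rw [List.map_cons, List.prod_cons, Module.End.mul_apply, coeff_L]
    apply Finset.sum_eq_zero
    intro i _
    rw [ih (α + Finsupp.single i 1) _ ?_, mul_zero]
    intro γ hγ hsum
    have hs : ((α + Finsupp.single i 1).sum fun _ e => e)
        = (α.sum fun _ e => e) + 1 := by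
      rw [Finsupp.sum_add_index' (fun _ => rfl) (fun _ _ _ => rfl)]
      rw [Finsupp.sum_single_index rfl]
    apply hg γ (le_trans le_self_add hγ)
    rw [hsum, hs]
    simp [List.length_cons]
    omega

end DkAux

open DkAux in
/-- If `D^1_{a,β}(f) = D^1_{b,β}(f)` for all `β ≥ α` with
`|β| = |α| + k - 1`, then `D^k_{a,α}(f) = D^k_{b,α}(f)`. -/
theorem Dk_eq_of_D1_eq (f : MvPolynomial (Fin n) F) (a b : Fin n → F)
    (α : Fin n →₀ ℕ) (k : ℕ) (hk : 1 ≤ k)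
    (h : ∀ β : Fin n →₀ ℕ, α ≤ β →
        (β.sum fun _ e => e) + 1 = (α.sum fun _ e => e) + k →
        Dk a β 1 f = Dk b β 1 f) :
    Dk a α k f = Dk b α k f := by
  obtain ⟨m, rfl⟩ : ∃ m, k = m + 1 := ⟨k - 1, by omega⟩
  set g : MvPolynomial (Fin n) F := L a f - L b f with hgdef
  have hg : ∀ γ : Fin n →₀ ℕ, α ≤ γ →
      (γ.sum fun _ e => e) = (α.sum fun _ e => e) + m → coeff γ g = 0 := by
    intro γ hγ hs
    have h1 := h γ hγ (by omega)
    rw [Dk_eq_monomial, Dk_eq_monomial, pow_one, pow_one] at h1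
    have h2 := congrArg (coeff γ) h1
    rw [coeff_monomial, if_pos rfl, coeff_monomial, if_pos rfl] at h2
    rw [hgdef, coeff_sub, h2, sub_self]
  have hcomm : Commute (L a) (L b) := commute_L a b
  -- the vanishing of mixed terms
  have hzero : ∀ j, j ≤ m → coeff α ((L a ^ j * L b ^ (m - j)) g) = 0 := by
    intro j hj
    have hl : ((List.replicate j a ++ List.replicate (m - j) b).map L).prod
        = L a ^ j * L b ^ (m - j) := by
      rw [List.map_append, List.prod_append, List.map_replicate, List.map_replicate,
        List.prod_replicate, List.prod_replicate]
    have hlen : (List.replicate j a ++ List.replicate (m - j) b).length = m := by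
      simp [List.length_append, List.length_replicate]
      omega
    have := vanish (List.replicate j a ++ List.replicate (m - j) b) α g
      (by rw [hlen]; exact hg)
    rwa [hl] at this
  -- telescoping
  have key : ∀ j, j ≤ m + 1 →
      coeff α ((L a ^ j * L b ^ (m + 1 - j)) f) = coeff α ((L b ^ (m + 1)) f) := by
    intro j hj
    induction j with
    | zero => rw [pow_zero, one_mul, Nat.sub_zero]
    | succ j ihj =>
      have hjm : j ≤ m := by omega
      rw [← ihj (by omega)]
      have hmj : m + 1 - j = (m - j) + 1 := by omega
      have expand : L a ^ (j + 1) * L b ^ (m + 1 - (j + 1))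
          = L a ^ j * L b ^ (m - j) * L a := by
        rw [show m + 1 - (j + 1) = m - j from by omega, pow_succ,
          mul_assoc, mul_assoc]
        congr 1
        exact (hcomm.pow_right (m - j)).eq
      have expand2 : L a ^ j * L b ^ (m + 1 - j)
          = L a ^ j * L b ^ (m - j) * L b := by
        rw [hmj, pow_succ, mul_assoc]
      rw [expand, expand2, Module.End.mul_apply, Module.End.mul_apply]
      have hsub : coeff α ((L a ^ j * L b ^ (m - j)) (L a f))
          - coeff α ((L a ^ j * L b ^ (m - j)) (L b f)) = 0 := by
        have hz := hzero j hjm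
        rw [hgdef, map_sub, coeff_sub] at hz
        exact hz
      exact sub_eq_zero.mp hsub
  have h1 := key (m + 1) le_rfl
  rw [Nat.sub_self, pow_zero, mul_one] at h1
  rw [Dk_eq_monomial, Dk_eq_monomial, h1]

end
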